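/- (Exactly solvable case c = 1.) Let a > 0, N ≥ 1, and for an integer k ≥ 0 set e_k(x) = Σ_{m=0}^{k} x^m/m!. Define P_k(z) := ( z^{k+1} − a^{k+1} · e_k(N a z)/e_k(N a²) ) / (z − a). Then P_k is a monic polynomial of degree k; it satisfies the orthogonality ∫_ℂ P_k(z) conj(z)^m |z−a|² e^{−N|z|²} dA(z) = 0 for all 0 ≤ m < k; distinct P_k are orthogonal, and its squared norm is h_k = ∫_ℂ |P_k(z)|² |z−a|² e^{−N|z|²} dA(z) = ((k+1)!/N^{k+2}) · e_{k+1}(N a²)/e_k(N a²). Equivalently, with the regularized incomplete gamma function Q(s,x) = Γ(s,x)/Γ(s), P_k(z) = (1/(z−a)) ( z^{k+1} − e^{aN(z−a)} (Q(k+1, N a z)/Q(k+1, N a²)) a^{k+1} ) and h_k = ((k+1)!/N^{k+2}) Q(k+2, N a²)/Q(k+1, N a²). -/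

import Mathlib

open MeasureTheory Polynomial Finset
open Real

noncomputable section

/-- Truncated exponential `e_k(x) = ∑_{m=0}^{k} x^m/m!` (complex version). -/
def ekC (k : ℕ) (x : ℂ) : ℂ := ∑ m ∈ Finset.range (k + 1), x ^ m / (Nat.factorial m : ℂ)

/-- Truncated exponential `e_k(x) = ∑_{m=0}^{k} x^m/m!` (real version). -/
def ekR (k : ℕ) (x : ℝ) : ℝ := ∑ m ∈ Finset.range (k + 1), x ^ m / (Nat.factorial m : ℝ)

/-- Regularized incomplete gamma function at integer first argument (real version):
`Q(s,x) = Γ(s,x)/Γ(s) = e^{-x} ∑_{m=0}^{s-1} x^m/m!`. -/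
def Qreg (s : ℕ) (x : ℝ) : ℝ :=
  Real.exp (-x) * ∑ m ∈ Finset.range s, x ^ m / (Nat.factorial m : ℝ)

/-- Regularized incomplete gamma function at integer first argument (complex version). -/
def QregC (s : ℕ) (x : ℂ) : ℂ :=
  Complex.exp (-x) * ∑ m ∈ Finset.range s, x ^ m / (Nat.factorial m : ℂ)

/-- The explicit `c = 1` orthogonal polynomial
`P_k(z) = (z^{k+1} - a^{k+1} e_k(Naz)/e_k(Na²))/(z-a)`. -/
def Pc1 (a : ℝ) (N : ℕ) (k : ℕ) (z : ℂ) : ℂ :=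
  (z ^ (k + 1) - (a : ℂ) ^ (k + 1) * ekC k ((N : ℂ) * a * z) / ekC k ((N : ℂ) * (a : ℂ) ^ 2)) /
    (z - (a : ℂ))

/-- The explicit squared norm `h_k = ((k+1)!/N^{k+2}) e_{k+1}(Na²)/e_k(Na²)`. -/
def hc1 (a : ℝ) (N : ℕ) (k : ℕ) : ℝ :=
  ((Nat.factorial (k + 1) : ℝ) / (N : ℝ) ^ (k + 2)) * (ekR (k + 1) (N * a ^ 2) / ekR k (N * a ^ 2))



lemma aux_pow_exp_bound (m : ℕ) (b t : ℝ) (hb : 0 < b) (ht : 0 ≤ t) :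
    t ^ m * Real.exp (-b * t ^ 2) ≤
      (m.factorial * Real.exp (1 / (2 * b))) * Real.exp (-(b/2) * t ^ 2) := by
  have h1 : t ^ m ≤ m.factorial * Real.exp t := by
    have := Real.pow_div_factorial_le_exp t ht m
    have hf : (0:ℝ) < m.factorial := by positivity
    calc t ^ m = m.factorial * (t ^ m / m.factorial) := by field_simp
    _ ≤ m.factorial * Real.exp t := by
        exact mul_le_mul_of_nonneg_left this hf.le
  calc t ^ m * Real.exp (-b * t ^ 2)
      ≤ (m.factorial * Real.exp t) * Real.exp (-b * t ^ 2) := by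
        exact mul_le_mul_of_nonneg_right h1 (Real.exp_pos _).le
    _ = m.factorial * Real.exp (t - b * t^2) := by
        rw [mul_assoc, ← Real.exp_add]; ring_nf
    _ ≤ m.factorial * Real.exp (1/(2*b) + (-(b/2) * t^2)) := by
        apply mul_le_mul_of_nonneg_left _ (by positivity)
        apply Real.exp_le_exp.mpr
        have hbne : b ≠ 0 := hb.ne'
        have key : b*(t-1/b)^2 = b*t^2 - 2*t + 1/b := by field_simp; ring
        have h0 : 0 ≤ b*(t-1/b)^2 := by positivity
        have h1b : 1/(2*b) = (1/b)/2 := by ring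
        rw [h1b]; linarith
    _ = (m.factorial * Real.exp (1 / (2 * b))) * Real.exp (-(b/2) * t ^ 2) := by
        rw [Real.exp_add]; ring

lemma aux_integrable (m : ℕ) (b : ℝ) (hb : 0 < b) :
    Integrable (fun z : ℂ => ‖z‖ ^ m * Real.exp (-b * ‖z‖ ^ 2)) := by
  have hmaj : Integrable (fun z : ℂ =>
      (m.factorial * Real.exp (1 / (2 * b))) *
        (Real.exp (-(b/2) * z.re ^ 2) * Real.exp (-(b/2) * z.im ^ 2))) := by
    have h2 : Integrable (fun p : ℝ × ℝ =>
        Real.exp (-(b/2) * p.1 ^ 2) * Real.exp (-(b/2) * p.2 ^ 2)) := by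
      rw [Measure.volume_eq_prod]
      exact (integrable_exp_neg_mul_sq (by positivity)).mul_prod
        (integrable_exp_neg_mul_sq (by positivity))
    have := (Complex.volume_preserving_equiv_real_prod.integrable_comp_emb
      Complex.measurableEquivRealProd.measurableEmbedding).mpr h2
    exact (this.const_mul _)
  refine hmaj.mono' ?_ ?_
  · exact (Continuous.mul (by continuity) (by continuity)).aestronglyMeasurable
  · filter_upwards with z
    rw [Real.norm_eq_abs, abs_of_nonneg (by positivity)]
    have := aux_pow_exp_bound m b (‖z‖) hb (norm_nonneg z)
    calc ‖z‖ ^ m * Real.exp (-b * ‖z‖ ^ 2)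
        ≤ (m.factorial * Real.exp (1 / (2 * b))) * Real.exp (-(b/2) * ‖z‖ ^ 2) := this
      _ = (m.factorial * Real.exp (1 / (2 * b))) *
          (Real.exp (-(b/2) * z.re ^ 2) * Real.exp (-(b/2) * z.im ^ 2)) := by
          rw [← Real.exp_add, Complex.sq_norm, Complex.normSq_apply]; ring_nf


lemma aux_radial (b : ℝ) (hb : 0 < b) (n : ℕ) :
    ∫ r in Set.Ioi (0:ℝ), r ^ (2*n+1) * Real.exp (-b * r ^ 2)
      = n.factorial / (2 * b ^ (n+1)) := by
  have h := integral_rpow_mul_exp_neg_mul_rpow (p := 2) (q := (2*n+1 : ℝ))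
    two_pos (by have := Nat.cast_nonneg (α:=ℝ) n; linarith) hb
  rw [show ((2*n+1 : ℝ) + 1)/2 = (n+1 : ℝ) by ring] at h
  rw [show ((-(2*n+1+1))/2 : ℝ) = (-(n+1) : ℝ) by ring] at h
  have h2 : ∫ r in Set.Ioi (0:ℝ), r ^ (2*n+1) * Real.exp (-b * r ^ 2)
      = ∫ x in Set.Ioi (0:ℝ), x ^ (2*n+1 : ℝ) * Real.exp (-b * x ^ (2:ℝ)) := by
    refine setIntegral_congr_fun measurableSet_Ioi (fun x hx => ?_)
    rw [show (2*n+1 : ℝ) = ((2*n+1 : ℕ) : ℝ) by push_cast; ring,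
      Real.rpow_natCast, show (2:ℝ) = ((2:ℕ):ℝ) by norm_num, Real.rpow_natCast]
  rw [Real.Gamma_nat_eq_factorial] at h
  rw [h2, h, show (-((n:ℝ)+1) : ℝ) = -(((n+1 : ℕ) : ℝ)) by push_cast; ring,
    Real.rpow_neg hb.le, Real.rpow_natCast]
  field_simp

lemma aux_angular (c : ℤ) (hc : c ≠ 0) :
    ∫ θ in Set.Ioo (-π) π, Complex.exp ((c:ℂ) * θ * Complex.I) = 0 := by
  have h1 : ∫ θ in Set.Ioo (-π) π, Complex.exp ((c:ℂ) * θ * Complex.I)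
      = ∫ θ in (-π)..π, Complex.exp (((c:ℂ) * Complex.I) * θ) := by
    rw [intervalIntegral.integral_of_le (by linarith [Real.pi_pos]),
      ← integral_Ioc_eq_integral_Ioo]
    congr 1; ext θ; ring_nf
  rw [h1, integral_exp_mul_complex (by simp [hc, Complex.I_ne_zero, Complex.ext_iff])]
  have key : ∀ x : ℝ, (c:ℂ) * Complex.I * x = (c : ℤ) * ((x:ℂ) * Complex.I) := by
    intro x; push_cast; ring
  rw [key π, key (-π), Complex.exp_int_mul, Complex.exp_int_mul]
  have hu : ((-1 : ℂ)) ^ c * ((-1:ℂ)) ^ c = 1 := by rw [← mul_zpow]; norm_num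
  rw [Complex.ofReal_neg, neg_mul, Complex.exp_neg, Complex.exp_pi_mul_I, inv_zpow,
    inv_eq_of_mul_eq_one_right hu, sub_self, zero_div]



lemma aux_moment (b : ℝ) (hb : 0 < b) (p q : ℕ) :
    (∫ z : ℂ, z ^ p * ((starRingEnd ℂ) z) ^ q * ((Real.exp (-b * ‖z‖ ^ 2) : ℝ) : ℂ))
      = if p = q then ((Real.pi * p.factorial / b ^ (p+1) : ℝ) : ℂ) else 0 := by
  rw [← Complex.integral_comp_polarCoord_symm]
  have hmeas : MeasurableSet polarCoord.target := polarCoord.open_target.measurableSet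
  have hcongr : (∫ x in polarCoord.target,
      x.1 • ((Complex.polarCoord.symm x) ^ p *
        ((starRingEnd ℂ) (Complex.polarCoord.symm x)) ^ q *
        ((Real.exp (-b * ‖Complex.polarCoord.symm x‖ ^ 2) : ℝ) : ℂ)))
      = ∫ x in polarCoord.target,
        (((x.1 ^ (p+q+1) * Real.exp (-b * x.1 ^ 2) : ℝ)) : ℂ) *
          Complex.exp (((p:ℂ) - (q:ℂ)) * x.2 * Complex.I) := by
    refine setIntegral_congr_fun hmeas (fun x hx => ?_)
    rw [polarCoord_target] at hx
    have hx1 : 0 < x.1 := hx.1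
    have hz : Complex.polarCoord.symm x = (x.1 : ℂ) * Complex.exp (x.2 * Complex.I) := by
      rw [Complex.polarCoord_symm_apply, Complex.exp_mul_I]
      push_cast
      ring
    have habs : ‖Complex.polarCoord.symm x‖ = x.1 := by
      rw [Complex.norm_polarCoord_symm, abs_of_pos hx1]
    have hzc : (starRingEnd ℂ) (Complex.polarCoord.symm x)
        = (x.1 : ℂ) * Complex.exp (-(x.2 * Complex.I)) := by
      rw [hz, map_mul, Complex.conj_ofReal, ← Complex.exp_conj]
      congr 2
      simp [Complex.ext_iff]
    rw [habs, hzc, hz, Complex.real_smul, mul_pow, mul_pow,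
      ← Complex.exp_nat_mul, ← Complex.exp_nat_mul]
    have hexp : Complex.exp ((p:ℂ) * (x.2 * Complex.I)) *
        Complex.exp ((q:ℂ) * -(x.2 * Complex.I))
        = Complex.exp (((p:ℂ) - (q:ℂ)) * x.2 * Complex.I) := by
      rw [← Complex.exp_add]
      ring_nf
    calc (x.1 : ℂ) * ((x.1:ℂ) ^ p * Complex.exp ((p:ℂ) * (x.2 * Complex.I)) *
          ((x.1:ℂ) ^ q * Complex.exp ((q:ℂ) * -(x.2 * Complex.I))) *
          ((Real.exp (-b * x.1 ^ 2) : ℝ) : ℂ))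
        = ((x.1:ℂ) ^ (p+q+1) * ((Real.exp (-b * x.1 ^ 2) : ℝ) : ℂ)) *
          (Complex.exp ((p:ℂ) * (x.2 * Complex.I)) *
           Complex.exp ((q:ℂ) * -(x.2 * Complex.I))) := by ring
      _ = _ := by rw [hexp]; push_cast; ring
  rw [hcongr, polarCoord_target, Measure.volume_eq_prod,
    setIntegral_prod_mul (fun r : ℝ => ((r ^ (p+q+1) * Real.exp (-b * r ^ 2) : ℝ) : ℂ))
      (fun θ : ℝ => Complex.exp (((p:ℂ) - (q:ℂ)) * θ * Complex.I))]
  by_cases hpq : p = q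
  · subst hpq
    rw [if_pos rfl]
    have hang : (∫ θ in Set.Ioo (-π) π,
        Complex.exp (((p:ℂ) - (p:ℂ)) * θ * Complex.I)) = ((2 * π : ℝ) : ℂ) := by
      simp only [sub_self, zero_mul, Complex.exp_zero]
      rw [setIntegral_const, Real.volume_real_Ioo_of_le (by linarith [Real.pi_pos])]
      rw [Complex.real_smul, mul_one]
      push_cast
      ring
    have hrad : (∫ r in Set.Ioi (0:ℝ), ((r ^ (p+p+1) * Real.exp (-b * r ^ 2) : ℝ) : ℂ))
        = ((p.factorial / (2 * b ^ (p+1)) : ℝ) : ℂ) := by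
      have h := aux_radial b hb p
      rw [show p + p + 1 = 2*p+1 by ring, ← h]
      exact integral_ofReal
    rw [hang, hrad]
    push_cast
    have hb' : (b:ℂ) ^ (p+1) ≠ 0 := by
      norm_cast
      positivity
    field_simp
  · rw [if_neg hpq]
    have hcast : ((p:ℂ) - (q:ℂ)) = ((((p:ℤ) - (q:ℤ)) : ℤ) : ℂ) := by push_cast; ring
    have hne : ((p:ℤ) - (q:ℤ)) ≠ 0 := by
      simp only [sub_ne_zero]
      exact_mod_cast hpq
    rw [hcast, aux_angular _ hne, mul_zero]



lemma aux_integrable_C (b : ℝ) (hb : 0 < b) (i j : ℕ) (c : ℂ) :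
    Integrable (fun z : ℂ => c * (z ^ i * ((starRingEnd ℂ) z) ^ j *
      ((Real.exp (-b * ‖z‖ ^ 2) : ℝ) : ℂ))) := by
  apply Integrable.const_mul
  refine (aux_integrable (i+j) b hb).mono' ?_ ?_
  · apply Continuous.aestronglyMeasurable
    continuity
  · filter_upwards with z
    rw [norm_mul, norm_mul, norm_pow, norm_pow,
      Complex.norm_conj, Complex.norm_real, Real.norm_eq_abs,
      abs_of_nonneg (Real.exp_pos _).le, pow_add]

lemma aux_sum (b : ℝ) (hb : 0 < b) (n₁ n₂ : ℕ) (f g : ℕ → ℂ) :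
    (∫ z : ℂ, (∑ i ∈ Finset.range n₁, f i * z ^ i) *
        (starRingEnd ℂ) (∑ j ∈ Finset.range n₂, g j * z ^ j) *
        ((Real.exp (-b * ‖z‖ ^ 2) : ℝ) : ℂ))
      = ∑ i ∈ Finset.range (min n₁ n₂), f i * (starRingEnd ℂ) (g i) *
          ((Real.pi * i.factorial / b ^ (i+1) : ℝ) : ℂ) := by
  have h1 : (fun z : ℂ => (∑ i ∈ Finset.range n₁, f i * z ^ i) *
        (starRingEnd ℂ) (∑ j ∈ Finset.range n₂, g j * z ^ j) *
        ((Real.exp (-b * ‖z‖ ^ 2) : ℝ) : ℂ))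
      = fun z : ℂ => ∑ i ∈ Finset.range n₁, ∑ j ∈ Finset.range n₂,
          (f i * (starRingEnd ℂ) (g j)) * (z ^ i * ((starRingEnd ℂ) z) ^ j *
            ((Real.exp (-b * ‖z‖ ^ 2) : ℝ) : ℂ)) := by
    funext z
    rw [map_sum, Finset.sum_mul_sum]
    rw [Finset.sum_mul]
    refine Finset.sum_congr rfl fun i _ => ?_
    rw [Finset.sum_mul]
    refine Finset.sum_congr rfl fun j _ => ?_
    rw [map_mul, map_pow]
    ring
  rw [h1, integral_finset_sum _
    (fun i _ => integrable_finset_sum _ (fun j _ => aux_integrable_C b hb i j _))]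
  have h2 : ∀ i ∈ Finset.range n₁,
      (∫ z : ℂ, ∑ j ∈ Finset.range n₂,
          (f i * (starRingEnd ℂ) (g j)) * (z ^ i * ((starRingEnd ℂ) z) ^ j *
            ((Real.exp (-b * ‖z‖ ^ 2) : ℝ) : ℂ)))
        = if i ∈ Finset.range n₂ then
            f i * (starRingEnd ℂ) (g i) * ((Real.pi * i.factorial / b ^ (i+1) : ℝ) : ℂ)
          else 0 := by
    intro i _
    rw [integral_finset_sum _ (fun j _ => aux_integrable_C b hb i j _)]
    have h3 : ∀ j ∈ Finset.range n₂,
        (∫ z : ℂ, (f i * (starRingEnd ℂ) (g j)) * (z ^ i * ((starRingEnd ℂ) z) ^ j *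
            ((Real.exp (-b * ‖z‖ ^ 2) : ℝ) : ℂ)))
          = if i = j then
              f i * (starRingEnd ℂ) (g j) * ((Real.pi * i.factorial / b ^ (i+1) : ℝ) : ℂ)
            else 0 := by
      intro j _
      rw [integral_const_mul, aux_moment b hb i j]
      by_cases hij : i = j
      · rw [if_pos hij, if_pos hij]
      · rw [if_neg hij, if_neg hij, mul_zero]
    rw [Finset.sum_congr rfl h3, Finset.sum_ite_eq (Finset.range n₂) i]
  rw [Finset.sum_congr rfl h2, Finset.sum_ite_mem]
  congr 1
  ext x
  simp [Nat.lt_min]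



/-- real coefficients of the numerator polynomial -/
def fcoef (a : ℝ) (N : ℕ) (k : ℕ) (i : ℕ) : ℝ :=
  if i = k + 1 then 1
  else -(a ^ (k+1) * ((N:ℝ) * a) ^ i / (i.factorial * ekR k ((N:ℝ) * a ^ 2)))

lemma ekR_pos (k : ℕ) {x : ℝ} (hx : 0 ≤ x) : 0 < ekR k x := by
  rw [ekR]
  apply Finset.sum_pos' (fun m _ => by positivity)
  exact ⟨0, Finset.mem_range.mpr (Nat.succ_pos k), by norm_num⟩

lemma ekC_ofReal (k : ℕ) (x : ℝ) : ekC k ((x : ℝ) : ℂ) = ((ekR k x : ℝ) : ℂ) := by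
  rw [ekC, ekR]
  push_cast
  rfl

section main
variable {a : ℝ} (ha : 0 < a) {N : ℕ} (hN : 1 ≤ N)

lemma hNR (hN : 1 ≤ N) : (0:ℝ) < N := by exact_mod_cast hN
lemma hE_pos (k : ℕ) (ha : 0 < a) (hN : 1 ≤ N) : 0 < ekR k ((N:ℝ) * a ^ 2) :=
  ekR_pos k (by positivity)

lemma ekC_arg (k : ℕ) : ekC k ((N : ℂ) * (a:ℂ) ^ 2) = ((ekR k ((N:ℝ) * a ^ 2) : ℝ) : ℂ) := by
  rw [show ((N : ℂ) * (a:ℂ) ^ 2) = (((N:ℝ) * a ^ 2 : ℝ) : ℂ) by push_cast; ring]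
  exact ekC_ofReal k _

lemma num_eq (k : ℕ) (ha : 0 < a) (hN : 1 ≤ N) : ∀ z : ℂ,
    z ^ (k + 1) - (a : ℂ) ^ (k + 1) * ekC k ((N : ℂ) * a * z) / ekC k ((N : ℂ) * (a:ℂ) ^ 2)
      = ∑ i ∈ Finset.range (k+2), ((fcoef a N k i : ℝ) : ℂ) * z ^ i := by
  intro z
  have hE := hE_pos k ha hN
  rw [Finset.sum_range_succ, fcoef, if_pos rfl, Complex.ofReal_one, one_mul, ekC_arg,
    ekC, Finset.mul_sum, Finset.sum_div]
  have hterm : ∀ i ∈ Finset.range (k+1),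
      ((fcoef a N k i : ℝ) : ℂ) * z ^ i
        = -((a:ℂ) ^ (k+1) * (((N:ℂ) * a * z) ^ i / (i.factorial : ℂ)) /
            ((ekR k ((N:ℝ) * a ^ 2) : ℝ) : ℂ)) := by
    intro i hi
    have hik : i ≠ k + 1 := Nat.ne_of_lt (Finset.mem_range.mp hi)
    rw [fcoef, if_neg hik]
    have hfac : ((i.factorial : ℝ) : ℂ) ≠ 0 := by exact_mod_cast i.factorial_ne_zero
    have hEne : ((ekR k ((N:ℝ) * a ^ 2) : ℝ) : ℂ) ≠ 0 := by exact_mod_cast hE.ne'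
    push_cast
    field_simp
    ring
  rw [Finset.sum_congr rfl hterm, Finset.sum_neg_distrib]
  ring
lemma num_a_zero (k : ℕ) (ha : 0 < a) (hN : 1 ≤ N) :
    ∑ i ∈ Finset.range (k+2), ((fcoef a N k i : ℝ) : ℂ) * (a:ℂ) ^ i = 0 := by
  have h := num_eq (a := a) (N := N) k ha hN (a : ℂ)
  rw [← h, show (N : ℂ) * (a:ℂ) * (a:ℂ) = (N : ℂ) * (a:ℂ) ^ 2 by ring]
  have hEne : ekC k ((N : ℂ) * (a:ℂ) ^ 2) ≠ 0 := by
    rw [ekC_arg]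
    exact_mod_cast (hE_pos k ha hN).ne'
  rw [mul_div_assoc, div_self hEne, mul_one, sub_self]

lemma pc1_key (k : ℕ) (ha : 0 < a) (hN : 1 ≤ N) : ∀ z : ℂ,
    Pc1 a N k z * ((z - (a:ℂ)) * (starRingEnd ℂ) (z - (a:ℂ)))
      = (∑ i ∈ Finset.range (k+2), ((fcoef a N k i : ℝ) : ℂ) * z ^ i) *
          (starRingEnd ℂ) (z - (a:ℂ)) := by
  intro z
  by_cases hz : z = (a:ℂ)
  · subst hz
    simp
  · have hzz : z - (a:ℂ) ≠ 0 := sub_ne_zero.mpr hz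
    rw [Pc1, num_eq k ha hN z]
    have key : ∀ (A w u : ℂ), u ≠ 0 → A / u * (u * w) = A * w := by
      intro A w u hu
      field_simp
    exact key _ _ _ hzz

lemma pc1_mul (k : ℕ) (ha : 0 < a) (hN : 1 ≤ N) (z : ℂ) (hz : z ≠ (a:ℂ)) :
    Pc1 a N k z * (z - (a:ℂ))
      = ∑ i ∈ Finset.range (k+2), ((fcoef a N k i : ℝ) : ℂ) * z ^ i := by
  rw [Pc1, num_eq k ha hN z, div_mul_cancel₀ _ (sub_ne_zero.mpr hz)]

lemma pc1_abs (k : ℕ) (ha : 0 < a) (hN : 1 ≤ N) : ∀ z : ℂ,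
    ‖Pc1 a N k z‖ ^ 2 * ‖z - (a:ℂ)‖ ^ 2
      = ‖∑ i ∈ Finset.range (k+2), ((fcoef a N k i : ℝ) : ℂ) * z ^ i‖ ^ 2 := by
  intro z
  by_cases hz : z = (a:ℂ)
  · subst hz
    rw [num_a_zero k ha hN]
    simp
  · rw [← mul_pow, ← norm_mul, pc1_mul k ha hN z hz]
lemma sumA (k m : ℕ) (hm : m < k) (ha : 0 < a) (hN : 1 ≤ N) :
    fcoef a N k m * (-a) * (π * m.factorial / (N:ℝ) ^ (m+1))
      + fcoef a N k (m+1) * (π * (m+1).factorial / (N:ℝ) ^ (m+2)) = 0 := by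
  have hE := hE_pos (a := a) (N := N) k ha hN
  have hNR' := hNR (N := N) hN
  rw [fcoef, if_neg (by omega), fcoef, if_neg (by omega)]
  have h1 : (m.factorial : ℝ) ≠ 0 := by exact_mod_cast m.factorial_ne_zero
  have h2 : ((m+1).factorial : ℝ) ≠ 0 := by exact_mod_cast (m+1).factorial_ne_zero
  have h3 : (m+1).factorial = (m+1) * m.factorial := rfl
  field_simp
  ring

lemma sumB (k : ℕ) (ha : 0 < a) (hN : 1 ≤ N) :
    ∑ i ∈ Finset.range (k+2), fcoef a N k i ^ 2 * (π * i.factorial / (N:ℝ) ^ (i+1))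
      = hc1 a N k * π := by
  have hE := hE_pos (a := a) (N := N) k ha hN
  have hNR' := hNR (N := N) hN
  rw [Finset.sum_range_succ, fcoef, if_pos rfl]
  have hterm : ∀ i ∈ Finset.range (k+1),
      fcoef a N k i ^ 2 * (π * i.factorial / (N:ℝ) ^ (i+1))
        = (π * a ^ (2*k+2) / ((N:ℝ) * ekR k ((N:ℝ) * a ^ 2) ^ 2)) *
            (((N:ℝ) * a ^ 2) ^ i / i.factorial) := by
    intro i hi
    rw [fcoef, if_neg (Nat.ne_of_lt (Finset.mem_range.mp hi))]
    have h1 : (i.factorial : ℝ) ≠ 0 := by exact_mod_cast i.factorial_ne_zero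
    field_simp
    ring
  rw [Finset.sum_congr rfl hterm, ← Finset.mul_sum, ← ekR]
  have hsucc : ekR (k+1) ((N:ℝ) * a ^ 2)
      = ekR k ((N:ℝ) * a ^ 2) + ((N:ℝ) * a ^ 2) ^ (k+1) / (k+1).factorial := by
    rw [ekR, ekR, Finset.sum_range_succ]
  have h2 : ((k+1).factorial : ℝ) ≠ 0 := by exact_mod_cast (k+1).factorial_ne_zero
  rw [hc1, hsucc]
  field_simp
  ring

lemma sumC (k l : ℕ) (hkl : k < l) (ha : 0 < a) (hN : 1 ≤ N) :
    ∑ i ∈ Finset.range (k+2), fcoef a N k i * fcoef a N l i *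
        (π * i.factorial / (N:ℝ) ^ (i+1)) = 0 := by
  have hEk := hE_pos (a := a) (N := N) k ha hN
  have hEl := hE_pos (a := a) (N := N) l ha hN
  have hNR' := hNR (N := N) hN
  rw [Finset.sum_range_succ, fcoef, if_pos rfl, one_mul, fcoef, if_neg (by omega)]
  have hterm : ∀ i ∈ Finset.range (k+1),
      fcoef a N k i * fcoef a N l i * (π * i.factorial / (N:ℝ) ^ (i+1))
        = (π * a ^ (k+1) * a ^ (l+1) /
            ((N:ℝ) * ekR k ((N:ℝ) * a ^ 2) * ekR l ((N:ℝ) * a ^ 2))) *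
            (((N:ℝ) * a ^ 2) ^ i / i.factorial) := by
    intro i hi
    rw [fcoef, if_neg (Nat.ne_of_lt (Finset.mem_range.mp hi)),
      fcoef, if_neg (by have := Finset.mem_range.mp hi; omega)]
    have h1 : (i.factorial : ℝ) ≠ 0 := by exact_mod_cast i.factorial_ne_zero
    field_simp
    ring
  rw [Finset.sum_congr rfl hterm, ← Finset.mul_sum, ← ekR]
  have h2 : ((k+1).factorial : ℝ) ≠ 0 := by exact_mod_cast (k+1).factorial_ne_zero
  field_simp
  ring
lemma abs_sq_cast (w : ℂ) :
    ((‖w‖ ^ 2 : ℝ) : ℂ) = w * (starRingEnd ℂ) w := by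
  rw [Complex.sq_norm, Complex.mul_conj]

lemma sum_cast (N : ℕ) (n : ℕ) (u v : ℕ → ℝ) :
    ∑ i ∈ Finset.range n, ((u i : ℝ) : ℂ) * (starRingEnd ℂ) ((v i : ℝ) : ℂ) *
        ((Real.pi * i.factorial / (N:ℝ) ^ (i+1) : ℝ) : ℂ)
      = ((∑ i ∈ Finset.range n, u i * v i * (Real.pi * i.factorial / (N:ℝ) ^ (i+1)) : ℝ) : ℂ) := by
  rw [Complex.ofReal_sum]
  refine Finset.sum_congr rfl fun i _ => ?_
  rw [Complex.conj_ofReal]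
  push_cast
  ring

lemma part1 (k m : ℕ) (hm : m < k) (ha : 0 < a) (hN : 1 ≤ N) :
    (∫ z : ℂ, Pc1 a N k z * ((starRingEnd ℂ) z) ^ m *
        ((‖z - (a : ℂ)‖ ^ 2 * Real.exp (-(N : ℝ) * ‖z‖ ^ 2) : ℝ) : ℂ))
      = 0 := by
  have hNR' := hNR (N := N) hN
  set g : ℕ → ℂ := fun j => if j = m+1 then 1 else if j = m then -(a:ℂ) else 0 with hgdef
  have hg : ∀ z : ℂ, (∑ j ∈ Finset.range (m+2), g j * z ^ j) = (z - (a:ℂ)) * z ^ m := by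
    intro z
    rw [Finset.sum_range_succ, Finset.sum_range_succ,
      Finset.sum_eq_zero (fun j hj => by
        have := Finset.mem_range.mp hj
        simp only [hgdef]
        rw [if_neg (by omega), if_neg (by omega), zero_mul])]
    simp only [hgdef]
    norm_num
    ring
  have hfun : ∀ z : ℂ, Pc1 a N k z * ((starRingEnd ℂ) z) ^ m *
        ((‖z - (a : ℂ)‖ ^ 2 * Real.exp (-(N : ℝ) * ‖z‖ ^ 2) : ℝ) : ℂ)
      = (∑ i ∈ Finset.range (k+2), ((fcoef a N k i : ℝ) : ℂ) * z ^ i) *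
          (starRingEnd ℂ) (∑ j ∈ Finset.range (m+2), g j * z ^ j) *
          ((Real.exp (-(N : ℝ) * ‖z‖ ^ 2) : ℝ) : ℂ) := by
    intro z
    rw [hg z, map_mul, map_pow, Complex.ofReal_mul, abs_sq_cast (z - (a:ℂ))]
    linear_combination (((starRingEnd ℂ) z) ^ m *
      ((Real.exp (-(N : ℝ) * ‖z‖ ^ 2) : ℝ) : ℂ)) * pc1_key k ha hN z
  rw [integral_congr_ae (Filter.Eventually.of_forall hfun),
    aux_sum (N:ℝ) hNR' (k+2) (m+2) _ g, min_eq_right (by omega)]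
  rw [Finset.sum_range_succ, Finset.sum_range_succ,
    Finset.sum_eq_zero (fun j hj => by
      have := Finset.mem_range.mp hj
      simp only [hgdef]
      rw [if_neg (by omega), if_neg (by omega), map_zero, mul_zero, zero_mul])]
  simp only [hgdef]
  norm_num [Complex.conj_ofReal]
  have hA := sumA (a := a) (N := N) k m hm ha hN
  have hA' : -(fcoef a N k m * a * (π * m.factorial / (N:ℝ) ^ (m+1)))
      + fcoef a N k (m+1) * (π * (m+1).factorial / (N:ℝ) ^ (m+1+1)) = 0 := by
    rw [show m+1+1 = m+2 from rfl]
    linarith [hA]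
  exact_mod_cast hA'

lemma part2 (k : ℕ) (ha : 0 < a) (hN : 1 ≤ N) :
    (∫ z : ℂ, ‖Pc1 a N k z‖ ^ 2 * ‖z - (a : ℂ)‖ ^ 2 *
        Real.exp (-(N : ℝ) * ‖z‖ ^ 2))
      = hc1 a N k * Real.pi := by
  have hNR' := hNR (N := N) hN
  have hre : ∀ z : ℂ, ‖Pc1 a N k z‖ ^ 2 * ‖z - (a : ℂ)‖ ^ 2 *
        Real.exp (-(N : ℝ) * ‖z‖ ^ 2)
      = ‖∑ i ∈ Finset.range (k+2), ((fcoef a N k i : ℝ) : ℂ) * z ^ i‖ ^ 2 *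
          Real.exp (-(N : ℝ) * ‖z‖ ^ 2) := by
    intro z
    rw [pc1_abs k ha hN z]
  rw [integral_congr_ae (Filter.Eventually.of_forall hre)]
  have hC := aux_sum (N:ℝ) hNR' (k+2) (k+2)
    (fun i => ((fcoef a N k i : ℝ) : ℂ)) (fun i => ((fcoef a N k i : ℝ) : ℂ))
  rw [min_self] at hC
  have hL : (∫ z : ℂ, (∑ i ∈ Finset.range (k+2), ((fcoef a N k i : ℝ) : ℂ) * z ^ i) *
        (starRingEnd ℂ) (∑ j ∈ Finset.range (k+2), ((fcoef a N k j : ℝ) : ℂ) * z ^ j) *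
        ((Real.exp (-(N : ℝ) * ‖z‖ ^ 2) : ℝ) : ℂ))
      = ((∫ z : ℂ, ‖∑ i ∈ Finset.range (k+2), ((fcoef a N k i : ℝ) : ℂ) * z ^ i‖ ^ 2 *
          Real.exp (-(N : ℝ) * ‖z‖ ^ 2) : ℝ) : ℂ) := by
    have hpt : ∀ z : ℂ, (∑ i ∈ Finset.range (k+2), ((fcoef a N k i : ℝ) : ℂ) * z ^ i) *
          (starRingEnd ℂ) (∑ j ∈ Finset.range (k+2), ((fcoef a N k j : ℝ) : ℂ) * z ^ j) *
          ((Real.exp (-(N : ℝ) * ‖z‖ ^ 2) : ℝ) : ℂ)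
        = ((‖∑ i ∈ Finset.range (k+2), ((fcoef a N k i : ℝ) : ℂ) * z ^ i‖ ^ 2 *
            Real.exp (-(N : ℝ) * ‖z‖ ^ 2) : ℝ) : ℂ) := by
      intro z
      rw [Complex.ofReal_mul, abs_sq_cast]
    exact (integral_congr_ae (Filter.Eventually.of_forall hpt)).trans integral_ofReal
  refine Complex.ofReal_inj.mp ?_
  rw [← hL, hC, sum_cast N (k+2) (fcoef a N k) (fcoef a N k)]
  have hfin : ∑ i ∈ Finset.range (k+2), fcoef a N k i * fcoef a N k i *
      (Real.pi * i.factorial / (N:ℝ) ^ (i+1)) = hc1 a N k * Real.pi := by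
    rw [← sumB k ha hN]
    exact Finset.sum_congr rfl fun i _ => by ring
  exact_mod_cast hfin

lemma part3 (k l : ℕ) (hkl : k ≠ l) (ha : 0 < a) (hN : 1 ≤ N) :
    (∫ z : ℂ, Pc1 a N k z * (starRingEnd ℂ) (Pc1 a N l z) *
        ((‖z - (a : ℂ)‖ ^ 2 * Real.exp (-(N : ℝ) * ‖z‖ ^ 2) : ℝ) : ℂ))
      = 0 := by
  have hNR' := hNR (N := N) hN
  have hfun : ∀ z : ℂ, Pc1 a N k z * (starRingEnd ℂ) (Pc1 a N l z) *
        ((‖z - (a : ℂ)‖ ^ 2 * Real.exp (-(N : ℝ) * ‖z‖ ^ 2) : ℝ) : ℂ)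
      = (∑ i ∈ Finset.range (k+2), ((fcoef a N k i : ℝ) : ℂ) * z ^ i) *
          (starRingEnd ℂ) (∑ j ∈ Finset.range (l+2), ((fcoef a N l j : ℝ) : ℂ) * z ^ j) *
          ((Real.exp (-(N : ℝ) * ‖z‖ ^ 2) : ℝ) : ℂ) := by
    intro z
    rw [Complex.ofReal_mul, abs_sq_cast (z - (a:ℂ))]
    by_cases hz : z = (a:ℂ)
    · subst hz
      rw [num_a_zero k ha hN, zero_mul, zero_mul, sub_self]
      simp
    · have h1 := pc1_mul k ha hN z hz
      have h2 := congrArg (starRingEnd ℂ) (pc1_mul l ha hN z hz)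
      rw [map_mul] at h2
      linear_combination ((starRingEnd ℂ) (Pc1 a N l z) * (starRingEnd ℂ) (z - (a:ℂ)) *
          ((Real.exp (-(N : ℝ) * ‖z‖ ^ 2) : ℝ) : ℂ)) * h1 +
        ((∑ i ∈ Finset.range (k+2), ((fcoef a N k i : ℝ) : ℂ) * z ^ i) *
          ((Real.exp (-(N : ℝ) * ‖z‖ ^ 2) : ℝ) : ℂ)) * h2
  rw [integral_congr_ae (Filter.Eventually.of_forall hfun), aux_sum (N:ℝ) hNR' (k+2) (l+2) _ _]
  rcases Nat.lt_or_ge k l with h | h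
  · rw [min_eq_left (by omega), sum_cast N (k+2) (fcoef a N k) (fcoef a N l)]
    exact_mod_cast sumC k l h ha hN
  · have hlk : l < k := by omega
    rw [min_eq_right (by omega), sum_cast N (l+2) (fcoef a N k) (fcoef a N l)]
    have hs : ∑ i ∈ Finset.range (l+2), fcoef a N k i * fcoef a N l i *
        (Real.pi * i.factorial / (N:ℝ) ^ (i+1)) = 0 := by
      rw [← sumC l k hlk ha hN]
      exact Finset.sum_congr rfl fun i _ => by ring
    exact_mod_cast hs

lemma part4 (k : ℕ) (ha : 0 < a) (hN : 1 ≤ N) :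
    ∃ Pk : Polynomial ℂ, Pk.Monic ∧ Pk.natDegree = k ∧
      (∀ z : ℂ, z ≠ (a : ℂ) → Pk.eval z = Pc1 a N k z) := by
  set F : ℕ → ℂ := fun i => ((fcoef a N k i : ℝ) : ℂ) with hF
  set Pnum : Polynomial ℂ := X ^ (k+1) + ∑ i ∈ Finset.range (k+1), C (F i) * X ^ i with hPnum
  have heval : ∀ z : ℂ, Pnum.eval z = ∑ i ∈ Finset.range (k+2), F i * z ^ i := by
    intro z
    rw [Finset.sum_range_succ, hPnum]
    have hFk : F (k+1) = 1 := by
      rw [hF]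
      norm_num [fcoef]
    rw [hFk, one_mul, eval_add, eval_pow, eval_X, eval_finset_sum]
    simp only [eval_mul, eval_pow, eval_C, eval_X]
    ring
  have hdeg_sum : (∑ i ∈ Finset.range (k+1), C (F i) * X ^ i).degree ≤ (k : WithBot ℕ) := by
    refine (Polynomial.degree_sum_le _ _).trans (Finset.sup_le fun i hi => ?_)
    refine (Polynomial.degree_C_mul_X_pow_le _ _).trans ?_
    exact_mod_cast Nat.lt_succ_iff.mp (Finset.mem_range.mp hi)
  have hklt : (k : WithBot ℕ) < ((k+1 : ℕ) : WithBot ℕ) := by exact_mod_cast Nat.lt_succ_self k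
  have hmonic : Pnum.Monic := Polynomial.monic_X_pow_add (lt_of_le_of_lt hdeg_sum hklt)
  have hdeg : Pnum.natDegree = k + 1 := by
    have hd : Pnum.degree = ((k+1 : ℕ) : WithBot ℕ) := by
      rw [hPnum]
      rw [Polynomial.degree_add_eq_left_of_degree_lt]
      · exact Polynomial.degree_X_pow (k+1)
      · rw [Polynomial.degree_X_pow]
        exact lt_of_le_of_lt hdeg_sum (by exact_mod_cast Nat.lt_succ_self k)
    exact Polynomial.natDegree_eq_of_degree_eq_some hd
  have heval_a : Pnum.eval (a : ℂ) = 0 := by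
    rw [heval]
    exact num_a_zero k ha hN
  have hfac : Pnum = (X - C (a:ℂ)) * (Pnum /ₘ (X - C (a:ℂ))) := by
    conv_lhs => rw [← Polynomial.modByMonic_add_div Pnum (X - C (a:ℂ))]
    rw [Polynomial.modByMonic_X_sub_C_eq_C_eval, heval_a, map_zero, zero_add]
  have hPkmonic : (Pnum /ₘ (X - C (a:ℂ))).Monic :=
    (Polynomial.monic_X_sub_C (a:ℂ)).of_mul_monic_left (by rw [← hfac]; exact hmonic)
  refine ⟨Pnum /ₘ (X - C (a:ℂ)), hPkmonic, ?_, ?_⟩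
  · have hmul := congrArg Polynomial.natDegree hfac
    rw [Polynomial.natDegree_mul (Polynomial.X_sub_C_ne_zero (a:ℂ)) hPkmonic.ne_zero,
      Polynomial.natDegree_X_sub_C, hdeg] at hmul
    omega
  · intro z hz
    have h := congrArg (Polynomial.eval z) hfac
    rw [Polynomial.eval_mul, Polynomial.eval_sub, Polynomial.eval_X, Polynomial.eval_C,
      heval] at h
    simp only [hF] at h
    rw [Pc1, num_eq k ha hN z, h, mul_div_cancel_left₀ _ (sub_ne_zero.mpr hz)]
lemma part5 (k : ℕ) (ha : 0 < a) (hN : 1 ≤ N) (z : ℂ) (hz : z ≠ (a:ℂ)) :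
    Pc1 a N k z
      = (z ^ (k + 1) - Complex.exp ((a : ℂ) * (N : ℂ) * (z - (a : ℂ))) *
          (QregC (k + 1) ((N : ℂ) * (a : ℂ) * z) / QregC (k + 1) ((N : ℂ) * (a : ℂ) ^ 2)) *
          (a : ℂ) ^ (k + 1)) / (z - (a : ℂ)) := by
  have hkey : Complex.exp ((a : ℂ) * (N : ℂ) * (z - (a : ℂ))) *
      (QregC (k + 1) ((N : ℂ) * (a : ℂ) * z) / QregC (k + 1) ((N : ℂ) * (a : ℂ) ^ 2)) *
      (a : ℂ) ^ (k + 1)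
      = (a : ℂ) ^ (k + 1) * ekC k ((N : ℂ) * a * z) / ekC k ((N : ℂ) * (a:ℂ) ^ 2) := by
    have hQ1 : QregC (k + 1) ((N : ℂ) * (a : ℂ) * z)
        = Complex.exp (-((N : ℂ) * (a : ℂ) * z)) * ekC k ((N : ℂ) * (a : ℂ) * z) := rfl
    have hQ2 : QregC (k + 1) ((N : ℂ) * (a : ℂ) ^ 2)
        = Complex.exp (-((N : ℂ) * (a : ℂ) ^ 2)) * ekC k ((N : ℂ) * (a : ℂ) ^ 2) := rfl
    have hEne : ekC k ((N : ℂ) * (a:ℂ) ^ 2) ≠ 0 := by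
      rw [ekC_arg]
      exact_mod_cast (hE_pos k ha hN).ne'
    have hexpne : Complex.exp (-((N : ℂ) * (a : ℂ) ^ 2)) ≠ 0 := Complex.exp_ne_zero _
    rw [hQ1, hQ2]
    calc Complex.exp ((a:ℂ) * N * (z - (a:ℂ))) *
          (Complex.exp (-((N:ℂ) * (a:ℂ) * z)) * ekC k ((N:ℂ) * (a:ℂ) * z) /
            (Complex.exp (-((N:ℂ) * (a:ℂ) ^ 2)) * ekC k ((N:ℂ) * (a:ℂ) ^ 2))) * (a:ℂ) ^ (k+1)
        = (Complex.exp ((a:ℂ) * N * (z - (a:ℂ))) * Complex.exp (-((N:ℂ) * (a:ℂ) * z)) /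
            Complex.exp (-((N:ℂ) * (a:ℂ) ^ 2))) *
            ((a:ℂ) ^ (k+1) * ekC k ((N:ℂ) * (a:ℂ) * z) / ekC k ((N:ℂ) * (a:ℂ) ^ 2)) := by
          field_simp
      _ = Complex.exp ((a:ℂ) * N * (z - (a:ℂ)) + -((N:ℂ) * (a:ℂ) * z) - -((N:ℂ) * (a:ℂ) ^ 2)) *
            ((a:ℂ) ^ (k+1) * ekC k ((N:ℂ) * (a:ℂ) * z) / ekC k ((N:ℂ) * (a:ℂ) ^ 2)) := by
          rw [← Complex.exp_add, ← Complex.exp_sub]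
      _ = (a:ℂ) ^ (k+1) * ekC k ((N:ℂ) * (a:ℂ) * z) / ekC k ((N:ℂ) * (a:ℂ) ^ 2) := by
          rw [show (a:ℂ) * N * (z - (a:ℂ)) + -((N:ℂ) * (a:ℂ) * z) - -((N:ℂ) * (a:ℂ) ^ 2)
              = 0 by ring, Complex.exp_zero, one_mul]
  rw [Pc1, hkey]
lemma part6 (k : ℕ) (ha : 0 < a) (hN : 1 ≤ N) :
    hc1 a N k = ((Nat.factorial (k + 1) : ℝ) / (N : ℝ) ^ (k + 2)) *
      (Qreg (k + 2) ((N:ℝ) * a ^ 2) / Qreg (k + 1) ((N:ℝ) * a ^ 2)) := by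
  have hQ1 : Qreg (k + 2) ((N:ℝ) * a ^ 2)
      = Real.exp (-((N:ℝ) * a ^ 2)) * ekR (k+1) ((N:ℝ) * a ^ 2) := rfl
  have hQ2 : Qreg (k + 1) ((N:ℝ) * a ^ 2)
      = Real.exp (-((N:ℝ) * a ^ 2)) * ekR k ((N:ℝ) * a ^ 2) := rfl
  rw [hc1, hQ1, hQ2, mul_div_mul_left _ _ (Real.exp_ne_zero _)]
end main


/-- the exactly solvable case `c = 1`.  For every `k`, `P_k` agrees (off `z = a`)
with a monic polynomial of degree `k`, is orthogonal to all lower powers and to the other `P_l`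
for the weight `|z-a|² e^{-N|z|²} dA`, and has squared norm `h_k`; moreover `P_k` and `h_k`
admit the equivalent expressions in terms of the regularized incomplete gamma function `Q`. -/
theorem stmt_13 (a : ℝ) (ha : 0 < a) (N : ℕ) (hN : 1 ≤ N) :
    (∀ k : ℕ, ∃ Pk : Polynomial ℂ,
      Pk.Monic ∧ Pk.natDegree = k ∧
      (∀ z : ℂ, z ≠ (a : ℂ) → Pk.eval z = Pc1 a N k z) ∧
      (∀ m < k,
        ∫ z : ℂ, Pc1 a N k z * ((starRingEnd ℂ) z) ^ m *
            ((‖z - (a : ℂ)‖ ^ 2 * Real.exp (-(N : ℝ) * ‖z‖ ^ 2) : ℝ) : ℂ)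
          = 0) ∧
      (∫ z : ℂ, ‖Pc1 a N k z‖ ^ 2 * ‖z - (a : ℂ)‖ ^ 2 *
            Real.exp (-(N : ℝ) * ‖z‖ ^ 2)
        = hc1 a N k * Real.pi)) ∧
    (∀ k l : ℕ, k ≠ l →
      ∫ z : ℂ, Pc1 a N k z * (starRingEnd ℂ) (Pc1 a N l z) *
          ((‖z - (a : ℂ)‖ ^ 2 * Real.exp (-(N : ℝ) * ‖z‖ ^ 2) : ℝ) : ℂ)
        = 0) ∧
    (∀ k : ℕ, ∀ z : ℂ, z ≠ (a : ℂ) →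
      Pc1 a N k z
        = (z ^ (k + 1) - Complex.exp ((a : ℂ) * (N : ℂ) * (z - (a : ℂ))) *
            (QregC (k + 1) ((N : ℂ) * (a : ℂ) * z) / QregC (k + 1) ((N : ℂ) * (a : ℂ) ^ 2)) *
            (a : ℂ) ^ (k + 1)) / (z - (a : ℂ))) ∧
    (∀ k : ℕ, hc1 a N k
        = ((Nat.factorial (k + 1) : ℝ) / (N : ℝ) ^ (k + 2)) *
          (Qreg (k + 2) (N * a ^ 2) / Qreg (k + 1) (N * a ^ 2))) := by
  refine ⟨fun k => ?_, fun k l hkl => part3 k l hkl ha hN,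
    fun k z hz => part5 k ha hN z hz, fun k => part6 k ha hN⟩
  obtain ⟨Pk, hmon, hdeg, hev⟩ := part4 k ha hN
  exact ⟨Pk, hmon, hdeg, hev, fun m hm => part1 k m hm ha hN, part2 k ha hN⟩

end
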